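/- arXiv:2203.09220 — 5 statements merged into one kernel-verified Lean document; each statement's English description precedes it below -/
import Mathlib

section
/- For J > 0 and ρ ∈ (0,1), the function σ_J(ρ) = ρ(1-ρ)/J satisfies the ODE σ'(ρ) = (f''(ρ)σ(ρ)² + (f(ρ) + 2ρ f'(ρ))σ(ρ) + ρ² f(ρ)) / (ρ f(ρ)), where f(ρ) = ρ(1-ρ)^J. -/
noncomputable def fJ (J : ℝ) : ℝ → ℝ := fun ρ => ρ * (1 - ρ) ^ J

noncomputable def sigmaJ (J : ℝ) : ℝ → ℝ := fun ρ => ρ * (1 - ρ) / J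

lemma aux_rpow (J x : ℝ) (hx : 0 < 1 - x) :
    HasDerivAt (fun y : ℝ => (1 - y) ^ J) (-(J * (1 - x) ^ (J - 1))) x := by
  have h1 : HasDerivAt (fun y : ℝ => 1 - y) (-1) x := by
    simpa using (hasDerivAt_id x).const_sub (1:ℝ)
  have h2 := (Real.hasDerivAt_rpow_const (x := 1 - x) (p := J)
    (Or.inl (ne_of_gt hx))).comp x h1
  exact h2.congr_deriv (by ring)

lemma fJ_hasDerivAt (J x : ℝ) (hx : 0 < 1 - x) :
    HasDerivAt (fJ J) ((1-x)^J - J * (x * (1-x)^(J-1))) x := by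
  have h := (hasDerivAt_id x).mul (aux_rpow J x hx)
  unfold fJ
  exact h.congr_deriv (by simp only [id_eq]; ring)

lemma g_hasDerivAt (J x : ℝ) (hx : 0 < 1 - x) :
    HasDerivAt (fun y => (1-y)^J - J * (y * (1-y)^(J-1)))
      (-(J * (1-x)^(J-1)) - J * (1 * (1-x)^(J-1) + x * (-( (J-1) * (1-x)^(J-1-1))))) x := by
  exact (aux_rpow J x hx).sub
    (((hasDerivAt_id x).mul (aux_rpow (J-1) x hx)).const_mul J)

theorem stmt3 (J : ℝ) (hJ : 0 < J) (ρ : ℝ) (hρ : ρ ∈ Set.Ioo (0:ℝ) 1) :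
    deriv (sigmaJ J) ρ =
      (deriv (deriv (fJ J)) ρ * (sigmaJ J ρ) ^ 2
        + (fJ J ρ + 2 * ρ * deriv (fJ J) ρ) * sigmaJ J ρ
        + ρ ^ 2 * fJ J ρ) / (ρ * fJ J ρ) := by
  obtain ⟨hρ0, hρ1⟩ := hρ
  have hp : 0 < 1 - ρ := by linarith
  -- deriv sigma
  have hσ : HasDerivAt (sigmaJ J) ((1 - 2*ρ)/J) ρ := by
    have h1 : HasDerivAt (fun y : ℝ => 1 - y) (-1) ρ := by
      simpa using (hasDerivAt_id ρ).const_sub (1:ℝ)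
    have := ((hasDerivAt_id ρ).mul h1).div_const J
    unfold sigmaJ
    exact this.congr_deriv (by simp only [id_eq]; ring)
  rw [hσ.deriv]
  -- first derivative
  have hd1 : deriv (fJ J) ρ = (1-ρ)^J - J * (ρ * (1-ρ)^(J-1)) :=
    (fJ_hasDerivAt J ρ hp).deriv
  -- second derivative: deriv (fJ J) agrees with g on a nbhd
  have hev : deriv (fJ J) =ᶠ[nhds ρ] fun y => (1-y)^J - J * (y * (1-y)^(J-1)) := by
    filter_upwards [IsOpen.mem_nhds (isOpen_Iio (a := (1:ℝ))) (show ρ ∈ Set.Iio 1 from hρ1)]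
      with y hy
    exact (fJ_hasDerivAt J y (by simpa [sub_pos] using hy)).deriv
  have hd2 : deriv (deriv (fJ J)) ρ =
      -(J * (1-ρ)^(J-1)) - J * (1 * (1-ρ)^(J-1) + ρ * (-( (J-1) * (1-ρ)^(J-1-1)))) := by
    rw [hev.deriv_eq]
    exact (g_hasDerivAt J ρ hp).deriv
  rw [hd1, hd2]
  -- rpow simplifications
  set A := (1-ρ)^(J-2) with hA
  have hApos : 0 < A := Real.rpow_pos_of_pos hp _
  have e1 : (1-ρ)^(J-1) = A * (1-ρ) := by
    rw [hA, ← Real.rpow_add_one (ne_of_gt hp)]; ring_nf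
  have e2 : (1-ρ)^J = A * (1-ρ)^2 := by
    rw [hA]
    rw [show J = (J-2) + 2 by ring, Real.rpow_add hp, Real.rpow_two]
    ring
  have e3 : (J-1-1 : ℝ) = J - 2 := by ring
  rw [e3, ← hA]
  unfold fJ sigmaJ
  rw [e1, e2]
  have hρne : ρ ≠ 0 := ne_of_gt hρ0
  have hpne : (1-ρ) ≠ 0 := ne_of_gt hp
  have hAne : A ≠ 0 := ne_of_gt hApos
  have hJne : J ≠ 0 := ne_of_gt hJ
  field_simp
  ring
end

section
/- Let f, b, ρ be as follows: f continuous on [0,1] with f > 0 on (0,1), b continuous with b(t) ≥ e^{-m}, and ρ̇ = -ρ f(ρ) b(t), ρ(0) = ρ₀ ∈ (0,1). Then for any ρ₁ ∈ (0, ρ₀), setting t₁ = e^m ∫_{ρ₁}^{ρ₀} dρ/(ρ f(ρ)) (assumed finite), one has ρ(t₁) ≤ ρ₁. -/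
open Set Filter

lemma ev_right10 {ρ : ℝ → ℝ} {u d : ℝ} (h : HasDerivAt ρ d u) (hd : d < 0) :
    ∀ᶠ t in nhdsWithin u (Set.Ioi u), ρ t < ρ u := by
  have hs : Filter.Tendsto (slope ρ u) (nhdsWithin u {u}ᶜ) (nhds d) :=
    hasDerivAt_iff_tendsto_slope.mp h
  have hs' : Filter.Tendsto (slope ρ u) (nhdsWithin u (Set.Ioi u)) (nhds d) :=
    hs.mono_left (nhdsWithin_mono _ (fun x hx => by simp [LT.lt.ne' (Set.mem_Ioi.mp hx)]))
  have hev := hs'.eventually (Iio_mem_nhds hd)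
  filter_upwards [hev, self_mem_nhdsWithin] with t ht ht'
  rw [slope_def_field] at ht
  simp only [Set.mem_Ioi] at ht'
  rcases div_neg_iff.mp ht with ⟨h1, h2⟩ | ⟨h1, h2⟩ <;> linarith

lemma ev_left10 {ρ : ℝ → ℝ} {u d : ℝ} (h : HasDerivAt ρ d u) (hd : d < 0) :
    ∀ᶠ t in nhdsWithin u (Set.Iio u), ρ u < ρ t := by
  have hs : Filter.Tendsto (slope ρ u) (nhdsWithin u {u}ᶜ) (nhds d) :=
    hasDerivAt_iff_tendsto_slope.mp h
  have hs' : Filter.Tendsto (slope ρ u) (nhdsWithin u (Set.Iio u)) (nhds d) :=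
    hs.mono_left (nhdsWithin_mono _ (fun x hx => by
      simp only [Set.mem_Iio] at hx; simp [hx.ne]))
  have hev := hs'.eventually (Iio_mem_nhds hd)
  filter_upwards [hev, self_mem_nhdsWithin] with t ht ht'
  rw [slope_def_field] at ht
  simp only [Set.mem_Iio] at ht'
  rcases div_neg_iff.mp ht with ⟨h1, h2⟩ | ⟨h1, h2⟩ <;> linarith

theorem stmt10 (f b ρ : ℝ → ℝ) (m ρ₀ ρ₁ : ℝ)
    (hfc : ContinuousOn f (Set.Icc 0 1))
    (hfpos : ∀ x ∈ Set.Ioo (0:ℝ) 1, 0 < f x)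
    (hbc : Continuous b)
    (hb : ∀ t ≥ (0:ℝ), Real.exp (-m) ≤ b t)
    (hρ0 : ρ 0 = ρ₀) (hρ₀ : ρ₀ ∈ Set.Ioo (0:ℝ) 1) (hρ₁ : ρ₁ ∈ Set.Ioo 0 ρ₀)
    (hode : ∀ t ≥ (0:ℝ), HasDerivAt ρ (-(ρ t * f (ρ t) * b t)) t)
    (hint : IntervalIntegrable (fun x => 1 / (x * f x)) MeasureTheory.volume ρ₁ ρ₀) :
    ρ (Real.exp m * ∫ x in ρ₁..ρ₀, 1 / (x * f x)) ≤ ρ₁ := by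
  obtain ⟨hρ₀0, hρ₀1⟩ := hρ₀
  obtain ⟨hρ₁0, hρ₁ρ₀⟩ := hρ₁
  -- the projection onto [ρ₁, ρ₀] and the extended positive function φ
  set proj : ℝ → ℝ := fun x => max ρ₁ (min x ρ₀) with hproj
  have hprojc : Continuous proj := continuous_const.max (continuous_id.min continuous_const)
  have hprojmem : ∀ x, proj x ∈ Icc ρ₁ ρ₀ := fun x =>
    ⟨le_max_left _ _, max_le hρ₁ρ₀.le (min_le_right _ _)⟩
  have hprojeq : ∀ x ∈ Icc ρ₁ ρ₀, proj x = x := fun x hx => by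
    simp only [hproj]; rw [min_eq_left hx.2, max_eq_right hx.1]
  have hsub : Icc ρ₁ ρ₀ ⊆ Icc (0:ℝ) 1 := Icc_subset_Icc hρ₁0.le hρ₀1.le
  set φ : ℝ → ℝ := fun x => proj x * f (proj x) with hφ
  have hφc : Continuous φ :=
    hprojc.mul (hfc.comp_continuous hprojc (fun x => hsub (hprojmem x)))
  have hφpos : ∀ x, 0 < φ x := fun x => mul_pos (lt_of_lt_of_le hρ₁0 (hprojmem x).1)
    (hfpos _ ⟨lt_of_lt_of_le hρ₁0 (hprojmem x).1, lt_of_le_of_lt (hprojmem x).2 hρ₀1⟩)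
  set g : ℝ → ℝ := fun x => (φ x)⁻¹ with hg
  have hgc : Continuous g := hφc.inv₀ (fun x => (hφpos x).ne')
  have hgpos : ∀ x, 0 < g x := fun x => inv_pos.mpr (hφpos x)
  have hgeq : ∀ x ∈ Icc ρ₁ ρ₀, g x = 1 / (x * f x) := fun x hx => by
    simp only [hg, hφ, hprojeq x hx, one_div]
  set G : ℝ → ℝ := fun y => ∫ x in ρ₁..y, g x with hG
  have hG' : ∀ y, HasDerivAt G (g y) y := fun y =>
    intervalIntegral.integral_hasDerivAt_right (hgc.intervalIntegrable _ _)
      (hgc.stronglyMeasurableAtFilter _ _) hgc.continuousAt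
  have hintId : (∫ x in ρ₁..ρ₀, 1 / (x * f x)) = G ρ₀ :=
    intervalIntegral.integral_congr (fun x hx =>
      (hgeq x (by rwa [uIcc_of_le hρ₁ρ₀.le] at hx)).symm)
  have hGρ₀pos : 0 < G ρ₀ :=
    intervalIntegral.intervalIntegral_pos_of_pos (hgc.intervalIntegrable _ _) hgpos hρ₁ρ₀
  set t₁ : ℝ := Real.exp m * ∫ x in ρ₁..ρ₀, 1 / (x * f x) with ht₁
  have ht₁G : Real.exp (-m) * t₁ = G ρ₀ := by
    rw [ht₁, hintId, ← mul_assoc, ← Real.exp_add]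
    simp
  have ht₁pos : 0 < t₁ := by
    rw [ht₁, hintId]; exact mul_pos (Real.exp_pos m) hGρ₀pos
  by_contra hcon
  push_neg at hcon
  -- sign of the derivative while in (0,1)
  have hderivneg : ∀ t, 0 ≤ t → ρ t ∈ Ioo (0:ℝ) 1 → -(ρ t * f (ρ t) * b t) < 0 := by
    intro t ht hmem
    have hbpos : 0 < b t := lt_of_lt_of_le (Real.exp_pos _) (hb t ht)
    have hp := mul_pos (mul_pos hmem.1 (hfpos _ hmem)) hbpos
    linarith
  have hρcont : ContinuousOn ρ (Icc 0 t₁) := fun t ht =>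
    ((hode t ht.1).continuousAt).continuousWithinAt
  -- Step A: ρ stays above ρ₁ on [0, t₁]
  have hlow : ∀ t ∈ Icc (0:ℝ) t₁, ρ₁ < ρ t := by
    by_contra hA
    push_neg at hA
    obtain ⟨s, hs, hsρ⟩ := hA
    set K : Set ℝ := Icc 0 t₁ ∩ ρ ⁻¹' (Iic ρ₁) with hK
    have hKc : IsClosed K := hρcont.preimage_isClosed_of_isClosed isClosed_Icc isClosed_Iic
    have hKne : K.Nonempty := ⟨s, hs, hsρ⟩
    have hKbdd : BddAbove K := ⟨t₁, fun x hx => hx.1.2⟩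
    set u := sSup K with hu
    have huK : u ∈ K := hKc.csSup_mem hKne hKbdd
    have hu0 : 0 ≤ u := huK.1.1
    have huρ : ρ u ≤ ρ₁ := huK.2
    have hut₁ : u < t₁ := by
      rcases lt_or_eq_of_le huK.1.2 with h | h
      · exact h
      · exact absurd (h ▸ huρ) (not_le.mpr hcon)
    have hgt : ∀ t ∈ Ioc u t₁, ρ₁ < ρ t := by
      intro t ht
      by_contra hle
      push_neg at hle
      have htK : t ∈ K := ⟨⟨le_trans hu0 ht.1.le, ht.2⟩, hle⟩
      exact absurd (le_csSup hKbdd htK) (not_le.mpr ht.1)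
    have hset : ∀ᶠ t in nhdsWithin u (Ioi u), t ∈ Ioc u t₁ :=
      Ioc_mem_nhdsGT_of_mem ⟨le_refl u, hut₁⟩
    have huρ₁ : ρ u = ρ₁ := by
      refine le_antisymm huρ ?_
      have htend : Tendsto ρ (nhdsWithin u (Ioi u)) (nhds (ρ u)) :=
        ((hode u hu0).continuousAt.continuousWithinAt)
      refine ge_of_tendsto htend ?_
      filter_upwards [hset] with t ht
      exact (hgt t ht).le
    have hd : -(ρ u * f (ρ u) * b u) < 0 :=
      hderivneg u hu0 (by rw [huρ₁]; exact ⟨hρ₁0, hρ₁ρ₀.trans hρ₀1⟩)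
    obtain ⟨t, ht1, ht2⟩ := ((ev_right10 (hode u hu0) hd).and hset).exists
    have := hgt t ht2
    rw [huρ₁] at ht1
    linarith
  -- Step B: ρ stays at most ρ₀ on [0, t₁]
  have hup : ∀ t ∈ Icc (0:ℝ) t₁, ρ t ≤ ρ₀ := by
    by_contra hB
    push_neg at hB
    obtain ⟨s, hs, hsρ⟩ := hB
    set c : ℝ := min ((ρ₀ + 1) / 2) (ρ s) with hc
    have hcρ₀ : ρ₀ < c := lt_min (by linarith) hsρ
    have hc1 : c < 1 := lt_of_le_of_lt (min_le_left _ _) (by linarith)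
    set L : Set ℝ := Icc 0 s ∩ ρ ⁻¹' (Ici c) with hL
    have hρconts : ContinuousOn ρ (Icc 0 s) := fun t ht =>
      ((hode t ht.1).continuousAt).continuousWithinAt
    have hLc : IsClosed L := hρconts.preimage_isClosed_of_isClosed isClosed_Icc isClosed_Ici
    have hLne : L.Nonempty := ⟨s, ⟨hs.1, le_refl s⟩, Set.mem_preimage.mpr (mem_Ici.mpr (min_le_right _ _))⟩
    have hLbdd : BddBelow L := ⟨0, fun x hx => hx.1.1⟩
    set v := sInf L with hv
    have hvL : v ∈ L := hLc.csInf_mem hLne hLbdd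
    have hvρ' : c ≤ ρ v := hvL.2
    have hv0 : 0 < v := by
      rcases lt_or_eq_of_le hvL.1.1 with h | h
      · exact h
      · exfalso; rw [← h, hρ0] at hvρ'; linarith
    have hlt : ∀ t, 0 ≤ t → t < v → ρ t < c := by
      intro t ht0 htv
      by_contra hge
      push_neg at hge
      have htL : t ∈ L := ⟨⟨ht0, le_trans htv.le hvL.1.2⟩, hge⟩
      exact absurd (csInf_le hLbdd htL) (not_le.mpr htv)
    have hset : ∀ᶠ t in nhdsWithin v (Iio v), t ∈ Ioo 0 v :=
      Ioo_mem_nhdsLT_of_mem ⟨hv0, le_refl v⟩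
    have hvρ : ρ v = c := by
      refine le_antisymm ?_ hvρ'
      have htend : Tendsto ρ (nhdsWithin v (Iio v)) (nhds (ρ v)) :=
        ((hode v hvL.1.1).continuousAt.continuousWithinAt)
      refine le_of_tendsto htend ?_
      filter_upwards [hset] with t ht
      exact (hlt t ht.1.le ht.2).le
    have hd : -(ρ v * f (ρ v) * b v) < 0 :=
      hderivneg v hvL.1.1 (by rw [hvρ]; exact ⟨lt_trans hρ₀0 hcρ₀, hc1⟩)
    obtain ⟨t, ht1, ht2⟩ := ((ev_left10 (hode v hvL.1.1) hd).and hset).exists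
    have := hlt t ht2.1.le ht2.2
    rw [hvρ] at ht1
    linarith
  -- Step C: the Lyapunov function W
  set W : ℝ → ℝ := fun t => G (ρ t) + Real.exp (-m) * t with hW
  have hWderiv : ∀ t ∈ Icc (0:ℝ) t₁,
      HasDerivAt W (g (ρ t) * (-(ρ t * f (ρ t) * b t)) + Real.exp (-m)) t := by
    intro t ht
    have h1 : HasDerivAt (fun t => G (ρ t)) (g (ρ t) * (-(ρ t * f (ρ t) * b t))) t :=
      (hG' (ρ t)).comp t (hode t ht.1)
    have h2 : HasDerivAt (fun t : ℝ => Real.exp (-m) * t) (Real.exp (-m)) t := by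
      simpa using (hasDerivAt_id t).const_mul (Real.exp (-m))
    exact h1.add h2
  have hval : ∀ t ∈ Icc (0:ℝ) t₁,
      g (ρ t) * (-(ρ t * f (ρ t) * b t)) + Real.exp (-m) ≤ 0 := by
    intro t ht
    have hmem : ρ t ∈ Icc ρ₁ ρ₀ := ⟨(hlow t ht).le, hup t ht⟩
    have hne : 0 < ρ t * f (ρ t) := mul_pos (hρ₁0.trans_le hmem.1)
      (hfpos _ ⟨hρ₁0.trans_le hmem.1, lt_of_le_of_lt hmem.2 hρ₀1⟩)
    rw [hgeq _ hmem]
    have heq : 1 / (ρ t * f (ρ t)) * -(ρ t * f (ρ t) * b t) = -(b t) := by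
      field_simp
      have h1 : ρ t ≠ 0 := (hρ₁0.trans_le hmem.1).ne'
      have h2 : f (ρ t) ≠ 0 := (hfpos _ ⟨hρ₁0.trans_le hmem.1, lt_of_le_of_lt hmem.2 hρ₀1⟩).ne'
      field_simp
    rw [heq]
    linarith [hb t ht.1]
  have hanti : AntitoneOn W (Icc 0 t₁) := by
    apply antitoneOn_of_deriv_nonpos (convex_Icc 0 t₁)
    · intro t ht
      exact (hWderiv t ht).continuousAt.continuousWithinAt
    · intro t ht
      rw [interior_Icc] at ht
      exact (hWderiv t (Ioo_subset_Icc_self ht)).differentiableAt.differentiableWithinAt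
    · intro t ht
      rw [interior_Icc] at ht
      rw [(hWderiv t (Ioo_subset_Icc_self ht)).deriv]
      exact hval t (Ioo_subset_Icc_self ht)
  have hfin : W t₁ ≤ W 0 :=
    hanti (left_mem_Icc.mpr ht₁pos.le) (right_mem_Icc.mpr ht₁pos.le) ht₁pos.le
  have hW0 : W 0 = G ρ₀ := by simp [hW, hρ0]
  have hWt₁ : W t₁ = G (ρ t₁) + Real.exp (-m) * t₁ := rfl
  rw [hW0, hWt₁, ht₁G] at hfin
  have hGle : G (ρ t₁) ≤ 0 := by linarith
  have hGpos : 0 < G (ρ t₁) :=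
    intervalIntegral.intervalIntegral_pos_of_pos (hgc.intervalIntegrable _ _) hgpos hcon
  linarith
end

section
/- Let σ : [0, ρ_max) → ℝ be a C¹ solution of σ'(ρ) = (f''(ρ)σ(ρ)² + (f(ρ)+2ρf'(ρ))σ(ρ) + ρ²f(ρ)) / (ρ f(ρ)) on (0, ρ_max) with σ continuous at 0, σ(0) = 0 and σ'(0) > 0, where f satisfies f > 0 on (0,1). Then σ(ρ) > 0 for all ρ ∈ (0, ρ_max). -/
theorem stmt13 (f σ : ℝ → ℝ) (ρmax : ℝ) (hρmax : ρmax ∈ Set.Ioc (0:ℝ) 1)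
    (hfpos : ∀ x ∈ Set.Ioo (0:ℝ) 1, 0 < f x)
    (hσc : ContinuousWithinAt σ (Set.Ici 0) 0)
    (hσ0 : σ 0 = 0) (s : ℝ) (hs : 0 < s)
    (hσ'0 : HasDerivWithinAt σ s (Set.Ici 0) 0)
    (hode : ∀ ρ ∈ Set.Ioo (0:ℝ) ρmax, HasDerivAt σ
      ((deriv (deriv f) ρ * σ ρ ^ 2 + (f ρ + 2 * ρ * deriv f ρ) * σ ρ
        + ρ ^ 2 * f ρ) / (ρ * f ρ)) ρ) :
    ∀ ρ ∈ Set.Ioo (0:ℝ) ρmax, 0 < σ ρ := by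
  intro ρ hρ
  by_contra hcon
  push_neg at hcon
  set S : Set ℝ := {x | x ∈ Set.Ioo (0:ℝ) ρmax ∧ σ x ≤ 0} with hSdef
  have hρS : ρ ∈ S := ⟨hρ, hcon⟩
  have hSne : S.Nonempty := ⟨ρ, hρS⟩
  have hSbdd : BddBelow S := ⟨0, fun x hx => le_of_lt hx.1.1⟩
  set z := sInf S with hzdef
  have hzρ : z ≤ ρ := csInf_le hSbdd hρS
  have hzmax : z < ρmax := lt_of_le_of_lt hzρ hρ.2
  -- positivity near 0 from the right derivative
  have hslope : Filter.Tendsto (slope σ 0) (nhdsWithin 0 (Set.Ici 0 \ {0})) (nhds s) :=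
    hasDerivWithinAt_iff_tendsto_slope.mp hσ'0
  rw [Set.Ici_sdiff_left] at hslope
  have hev : ∀ᶠ x in nhdsWithin 0 (Set.Ioi 0), 0 < slope σ 0 x :=
    hslope.eventually (eventually_gt_nhds hs)
  obtain ⟨ε, hε, hball⟩ := Metric.mem_nhdsWithin_iff.mp hev
  have hεpos : ∀ x : ℝ, 0 < x → x < ε → 0 < σ x := by
    intro x hx hxε
    have hmem : x ∈ Metric.ball (0:ℝ) ε ∩ Set.Ioi 0 := by
      constructor
      · simpa [Real.dist_eq, abs_of_pos hx] using hxε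
      · exact hx
    have h2 := hball hmem
    simp only [Set.mem_setOf_eq, slope_def_field, hσ0, sub_zero] at h2
    have hxne : x ≠ 0 := ne_of_gt hx
    have := mul_pos h2 hx
    rwa [div_mul_cancel₀ _ hxne] at this
  have hεz : ε ≤ z := by
    apply le_csInf hSne
    intro x hx
    by_contra hlt
    push_neg at hlt
    exact absurd (hεpos x hx.1.1 hlt) (not_lt.mpr hx.2)
  have hz0 : 0 < z := lt_of_lt_of_le hε hεz
  have hpos : ∀ x : ℝ, 0 < x → x < z → 0 < σ x := by
    intro x hx hxz
    by_contra hle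
    push_neg at hle
    have : x ∈ S := ⟨⟨hx, hxz.trans hzmax⟩, hle⟩
    exact absurd (csInf_le hSbdd this) (not_le.mpr hxz)
  have hzIoo : z ∈ Set.Ioo (0:ℝ) ρmax := ⟨hz0, hzmax⟩
  have hcz : ContinuousAt σ z := (hode z hzIoo).continuousAt
  -- σ z ≥ 0
  have hσz_ge : 0 ≤ σ z := by
    have h1 : Filter.Tendsto σ (nhdsWithin z (Set.Iio z)) (nhds (σ z)) :=
      hcz.tendsto.mono_left nhdsWithin_le_nhds
    have hev' : ∀ᶠ x in nhdsWithin z (Set.Iio z), 0 ≤ σ x := by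
      have h0 : ∀ᶠ x in nhdsWithin z (Set.Iio z), 0 < x :=
        Filter.Eventually.filter_mono nhdsWithin_le_nhds (eventually_gt_nhds hz0)
      have hlt : ∀ᶠ x in nhdsWithin z (Set.Iio z), x < z :=
        eventually_mem_nhdsWithin.mono fun x hx => hx
      filter_upwards [h0, hlt] with x hx1 hx2
      exact le_of_lt (hpos x hx1 hx2)
    exact ge_of_tendsto h1 hev'
  -- σ z ≤ 0
  have hσz_le : σ z ≤ 0 := by
    by_contra hgt
    push_neg at hgt
    have hev' : ∀ᶠ x in nhds z, 0 < σ x := hcz.tendsto.eventually (eventually_gt_nhds hgt)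
    obtain ⟨δ, hδ, hδball⟩ := Metric.eventually_nhds_iff.mp hev'
    have hlt : z < z + δ := by linarith
    obtain ⟨x, hxS, hxlt⟩ := exists_lt_of_csInf_lt hSne (hzdef ▸ hlt)
    have hxz : z ≤ x := csInf_le hSbdd hxS
    have : 0 < σ x := by
      apply hδball
      rw [Real.dist_eq, abs_lt]
      constructor <;> linarith
    exact absurd this (not_lt.mpr hxS.2)
  have hσz : σ z = 0 := le_antisymm hσz_le hσz_ge
  -- ODE at z gives σ'(z) = z > 0
  have hfz : 0 < f z := hfpos z ⟨hz0, lt_of_lt_of_le hzmax hρmax.2⟩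
  have hd := hode z hzIoo
  rw [hσz] at hd
  have hsimp : (deriv (deriv f) z * 0 ^ 2 + (f z + 2 * z * deriv f z) * 0
      + z ^ 2 * f z) / (z * f z) = z := by
    field_simp
    ring
  rw [hsimp] at hd
  have hslope2 := hasDerivAt_iff_tendsto_slope.mp hd
  have hev2 : ∀ᶠ x in nhdsWithin z {z}ᶜ, 0 < slope σ z x :=
    hslope2.eventually (eventually_gt_nhds hz0)
  have hle : nhdsWithin z (Set.Iio z) ≤ nhdsWithin z {z}ᶜ :=
    nhdsWithin_mono z (fun x hx => ne_of_lt hx)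
  have hev3 : ∀ᶠ x in nhdsWithin z (Set.Iio z),
      0 < slope σ z x ∧ 0 < x ∧ x < z := by
    have h0 : ∀ᶠ x in nhdsWithin z (Set.Iio z), 0 < x :=
      Filter.Eventually.filter_mono nhdsWithin_le_nhds (eventually_gt_nhds hz0)
    have hlt' : ∀ᶠ x in nhdsWithin z (Set.Iio z), x < z :=
      eventually_mem_nhdsWithin.mono fun x hx => hx
    filter_upwards [hev2.filter_mono hle, h0, hlt'] with x h1 h2 h3
    exact ⟨h1, h2, h3⟩
  obtain ⟨x, hx1, hx2, hx3⟩ := hev3.exists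
  rw [slope_def_field, hσz, sub_zero] at hx1
  have hxz : x - z < 0 := sub_neg.mpr hx3
  have hσx : σ x < 0 := by
    rcases div_pos_iff.mp hx1 with ⟨_, h⟩ | ⟨h, _⟩
    · linarith
    · exact h
  exact absurd (hpos x hx2 hx3) (not_lt.mpr (le_of_lt hσx))
end

section
/- Let f be C³ near 0 with f(0) = 0, f'(0) > 0, f''(0) < 0, and let d̃ be a C¹ trajectory satisfying d̃'(ρ) = (f''(ρ)d̃(ρ)² + (f(ρ)+2ρf'(ρ))d̃(ρ) + ρ²f(ρ)) / (ρ f(ρ)) on (0,ε) with d̃(0) = 0 and d̃'(0) existing. Then d̃'(0) = 0 or d̃'(0) = -2f'(0)/f''(0). -/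
open Set Filter Topology

theorem stmt14 (f d : ℝ → ℝ) (ε L : ℝ) (hε : 0 < ε)
    (hf : ContDiffOn ℝ 3 f (Set.Ioo (-ε) ε))
    (hf0 : f 0 = 0) (hfd0 : 0 < deriv f 0) (hfdd0 : deriv (deriv f) 0 < 0)
    (hd0 : d 0 = 0)
    (hode : ∀ ρ ∈ Set.Ioo (0:ℝ) ε, HasDerivAt d
      ((deriv (deriv f) ρ * d ρ ^ 2 + (f ρ + 2 * ρ * deriv f ρ) * d ρ
        + ρ ^ 2 * f ρ) / (ρ * f ρ)) ρ)
    (hL : HasDerivWithinAt d L (Set.Ici 0) 0) :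
    L = 0 ∨ L = -2 * deriv f 0 / deriv (deriv f) 0 := by
  set a := deriv f 0 with ha
  set b := deriv (deriv f) 0 with hb
  have h0mem : (0:ℝ) ∈ Set.Ioo (-ε) ε := ⟨by linarith, hε⟩
  have hnhds : Set.Ioo (-ε) ε ∈ 𝓝 (0:ℝ) := isOpen_Ioo.mem_nhds h0mem
  -- regularity of derivatives of f
  have hf1 : ContDiffOn ℝ 2 (deriv f) (Set.Ioo (-ε) ε) :=
    hf.deriv_of_isOpen isOpen_Ioo (by norm_num)
  have hf2 : ContDiffOn ℝ 1 (deriv (deriv f)) (Set.Ioo (-ε) ε) :=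
    hf1.deriv_of_isOpen isOpen_Ioo (by norm_num)
  -- limit of d ρ / ρ is L
  have h1 : Tendsto (fun ρ => d ρ / ρ) (𝓝[>] (0:ℝ)) (𝓝 L) := by
    have := hasDerivWithinAt_iff_tendsto_slope.mp hL
    rw [Set.Ici_sdiff_left] at this
    refine this.congr (fun ρ => ?_)
    simp [slope_def_field, hd0]
  -- limit of f ρ / ρ is a
  have hdf : HasDerivAt f a 0 :=
    ((hf.contDiffAt hnhds).differentiableAt (by norm_num)).hasDerivAt
  have h2 : Tendsto (fun ρ => f ρ / ρ) (𝓝[>] (0:ℝ)) (𝓝 a) := by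
    have := hasDerivAt_iff_tendsto_slope.mp hdf
    have := this.mono_left (nhdsWithin_mono 0 (fun x (hx : x ∈ Set.Ioi 0) => ne_of_gt hx))
    refine this.congr (fun ρ => ?_)
    simp [slope_def_field, hf0]
  -- continuity limits
  have h3 : Tendsto (fun ρ => deriv (deriv f) ρ) (𝓝[>] (0:ℝ)) (𝓝 b) :=
    ((hf2.continuousOn.continuousAt hnhds).tendsto).mono_left nhdsWithin_le_nhds
  have h4 : Tendsto (fun ρ => deriv f ρ) (𝓝[>] (0:ℝ)) (𝓝 a) :=
    ((hf1.continuousOn.continuousAt hnhds).tendsto).mono_left nhdsWithin_le_nhds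
  have h5 : Tendsto f (𝓝[>] (0:ℝ)) (𝓝 0) := by
    have := (hf.continuousOn.continuousAt hnhds).tendsto
    rw [hf0] at this
    exact this.mono_left nhdsWithin_le_nhds
  have hid : Tendsto (fun ρ : ℝ => ρ) (𝓝[>] (0:ℝ)) (𝓝 0) :=
    tendsto_id.mono_left nhdsWithin_le_nhds
  -- d tends to 0
  have hdlim : Tendsto d (𝓝[>] (0:ℝ)) (𝓝 0) := by
    have := h1.mul hid
    rw [mul_zero] at this
    refine this.congr' ?_
    filter_upwards [self_mem_nhdsWithin] with ρ (hρ : (0:ℝ) < ρ)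
    exact div_mul_cancel₀ _ (ne_of_gt hρ)
  set M := (b * L ^ 2 + (a + 2 * a) * L + 0) / a with hM
  -- limit of the RHS of the ODE
  have hRHS : Tendsto (fun ρ => (deriv (deriv f) ρ * d ρ ^ 2 + (f ρ + 2 * ρ * deriv f ρ) * d ρ
      + ρ ^ 2 * f ρ) / (ρ * f ρ)) (𝓝[>] (0:ℝ)) (𝓝 M) := by
    have hnum : Tendsto (fun ρ => (deriv (deriv f) ρ * (d ρ / ρ) ^ 2
        + (f ρ / ρ + 2 * deriv f ρ) * (d ρ / ρ) + f ρ) / (f ρ / ρ))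
        (𝓝[>] (0:ℝ)) (𝓝 M) := by
      exact (((h3.mul (h1.pow 2)).add ((h2.add (h4.const_mul 2)).mul h1)).add h5).div h2
        (ne_of_gt hfd0)
    refine hnum.congr' ?_
    filter_upwards [self_mem_nhdsWithin] with ρ (hρ : (0:ℝ) < ρ)
    rcases eq_or_ne (f ρ) 0 with h | h
    · simp [h]
    · field_simp
  -- l'Hôpital
  have hlhop : Tendsto (fun ρ => d ρ / ρ) (𝓝[>] (0:ℝ)) (𝓝 M) := by
    exact HasDerivAt.lhopital_zero_right_on_Ioo (l := 𝓝 M) hε hode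
      (fun x _ => hasDerivAt_id x) (fun x _ => one_ne_zero) hdlim hid (by simpa using hRHS)
  have hLM : L = M := tendsto_nhds_unique h1 hlhop
  -- final algebra
  have key : L * (b * L + 2 * a) = 0 := by
    have haL : a * L = b * L ^ 2 + 3 * a * L := by
      have := hLM
      rw [hM] at this
      field_simp at this
      linarith [this]
    nlinarith [haL]
  rcases mul_eq_zero.mp key with h | h
  · exact Or.inl h
  · right
    have hbne : b ≠ 0 := ne_of_lt hfdd0
    field_simp
    linarith [h]
end

section
/- Let α ∈ ℝ, β > 0, and consider s(ρ) solving the equation s'(ρ) = -(2/β)(s(ρ)/ρ)² + 3(s(ρ)/ρ) + R(ρ, s(ρ)) on (0, ε], where |R| ≤ ε. If δ = √ε and ε is sufficiently small, then whenever s(ρ) = (1-δ)βρ one has s'(ρ) > β, and whenever s(ρ) = (1+δ)βρ one has s'(ρ) < β. Consequently any solution with (1-δ)βρ₀ ≤ s(ρ₀) ≤ (1+δ)βρ₀ for some ρ₀ ∈ (0,ε] remains in the cone (1-δ)βρ ≤ s(ρ) ≤ (1+δ)βρ for ρ ∈ [ρ₀, ε]. -/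
theorem stmt15 (β : ℝ) (hβ : 0 < β) :
    ∃ ε₀ > (0:ℝ), ∀ ε : ℝ, 0 < ε → ε < ε₀ →
      ∀ (s : ℝ → ℝ) (R : ℝ → ℝ → ℝ),
        (∀ ρ x, |R ρ x| ≤ ε) →
        (∀ ρ ∈ Set.Ioc (0:ℝ) ε, HasDerivAt s
          (-(2 / β) * (s ρ / ρ) ^ 2 + 3 * (s ρ / ρ) + R ρ (s ρ)) ρ) →
        (∀ ρ ∈ Set.Ioc (0:ℝ) ε,
            s ρ = (1 - Real.sqrt ε) * β * ρ → β < deriv s ρ) ∧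
        (∀ ρ ∈ Set.Ioc (0:ℝ) ε,
            s ρ = (1 + Real.sqrt ε) * β * ρ → deriv s ρ < β) ∧
        (∀ ρ₀ ∈ Set.Ioc (0:ℝ) ε,
            (1 - Real.sqrt ε) * β * ρ₀ ≤ s ρ₀ →
            s ρ₀ ≤ (1 + Real.sqrt ε) * β * ρ₀ →
            ∀ ρ ∈ Set.Icc ρ₀ ε,
              (1 - Real.sqrt ε) * β * ρ ≤ s ρ ∧ s ρ ≤ (1 + Real.sqrt ε) * β * ρ) := by
  refine ⟨min ((1/4:ℝ)^2) ((β/2)^2), by positivity, ?_⟩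
  intro ε hε hεlt s R hR hs
  set δ := Real.sqrt ε with hδdef
  have hδpos : 0 < δ := Real.sqrt_pos.2 hε
  have hδsq : δ ^ 2 = ε := Real.sq_sqrt hε.le
  have hδ4 : δ < 1/4 := by
    have := Real.sqrt_lt_sqrt hε.le (lt_of_lt_of_le hεlt (min_le_left _ _))
    rwa [Real.sqrt_sq (by norm_num : (0:ℝ) ≤ 1/4)] at this
  have hδβ : δ < β/2 := by
    have := Real.sqrt_lt_sqrt hε.le (lt_of_lt_of_le hεlt (min_le_right _ _))
    rwa [Real.sqrt_sq (by positivity : (0:ℝ) ≤ β/2)] at this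
  set F : ℝ → ℝ := fun ρ => -(2 / β) * (s ρ / ρ) ^ 2 + 3 * (s ρ / ρ) + R ρ (s ρ) with hF
  -- key estimates at the boundaries
  have key_lo : ∀ ρ ∈ Set.Ioc (0:ℝ) ε, s ρ = (1 - δ) * β * ρ → β < F ρ := by
    intro ρ hρ heq
    have hρ0 : ρ ≠ 0 := ne_of_gt hρ.1
    have hq : s ρ / ρ = (1 - δ) * β := by rw [heq]; field_simp
    have hRb : -(δ^2) ≤ R ρ (s ρ) := by
      have := (abs_le.1 (hR ρ (s ρ))).1
      rw [hδsq]; linarith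
    have hsq : -(2 / β) * ((1 - δ) * β) ^ 2 = -2 * β * (1 - δ)^2 := by
      field_simp
    simp only [hF, hq, hsq]
    nlinarith [sq_nonneg δ, mul_pos hδpos hβ]
  have key_hi : ∀ ρ ∈ Set.Ioc (0:ℝ) ε, s ρ = (1 + δ) * β * ρ → F ρ < β := by
    intro ρ hρ heq
    have hρ0 : ρ ≠ 0 := ne_of_gt hρ.1
    have hq : s ρ / ρ = (1 + δ) * β := by rw [heq]; field_simp
    have hRb : R ρ (s ρ) ≤ δ^2 := by
      have := (abs_le.1 (hR ρ (s ρ))).2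
      rw [hδsq]; linarith
    have hsq : -(2 / β) * ((1 + δ) * β) ^ 2 = -2 * β * (1 + δ)^2 := by
      field_simp
    simp only [hF, hq, hsq]
    nlinarith [sq_nonneg δ, mul_pos hδpos hβ]
  have hderiv : ∀ ρ ∈ Set.Ioc (0:ℝ) ε, deriv s ρ = F ρ := fun ρ hρ => (hs ρ hρ).deriv
  refine ⟨fun ρ hρ heq => by rw [hderiv ρ hρ]; exact key_lo ρ hρ heq,
          fun ρ hρ heq => by rw [hderiv ρ hρ]; exact key_hi ρ hρ heq, ?_⟩
  intro ρ₀ hρ₀ hlo hhi ρ hρ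
  have hsub : Set.Icc ρ₀ ε ⊆ Set.Ioc (0:ℝ) ε := fun x hx =>
    ⟨lt_of_lt_of_le hρ₀.1 hx.1, hx.2⟩
  have hcont : ContinuousOn s (Set.Icc ρ₀ ε) := fun x hx =>
    ((hs x (hsub hx)).continuousAt).continuousWithinAt
  have hIco : ∀ x ∈ Set.Ico ρ₀ ε, x ∈ Set.Ioc (0:ℝ) ε := fun x hx =>
    ⟨lt_of_lt_of_le hρ₀.1 hx.1, hx.2.le⟩
  constructor
  · -- lower barrier: apply fencing to -s vs -(1-δ)βρ
    have := image_le_of_deriv_right_lt_deriv_boundary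
      (f := fun x => -s x) (f' := fun x => -F x) (a := ρ₀) (b := ε)
      (hcont.neg)
      (fun x hx => ((hs x (hIco x hx)).neg).hasDerivWithinAt)
      (B := fun x => -((1 - δ) * β * x)) (B' := fun _ => -((1 - δ) * β))
      (by simpa using hlo)
      (fun x => by
        exact (((hasDerivAt_id x).const_mul ((1 - δ) * β)).neg).congr_deriv (by ring))
      (fun x hx heq => by
        have heq' : s x = (1 - δ) * β * x := by linarith [neg_injective heq]
        have := key_lo x (hIco x hx) heq'
        have hδβ' : (1 - δ) * β < β := by nlinarith
        simp only [neg_lt_neg_iff]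
        linarith)
    have := this hρ
    simpa using this
  · -- upper barrier
    have := image_le_of_deriv_right_lt_deriv_boundary
      (f := s) (f' := F) (a := ρ₀) (b := ε)
      hcont
      (fun x hx => (hs x (hIco x hx)).hasDerivWithinAt)
      (B := fun x => (1 + δ) * β * x) (B' := fun _ => (1 + δ) * β)
      hhi
      (fun x => by simpa using (hasDerivAt_id x).const_mul ((1 + δ) * β))
      (fun x hx heq => by
        have h1 : F x < β := key_hi x (hIco x hx) heq
        show F x < (1 + δ) * β
        nlinarith [mul_pos hδpos hβ])
    exact this hρ
end
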